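/- Let A be a real symmetric d×d matrix (d ≥ 3) all of whose diagonal entries equal α, with all off-diagonal entries equal to ±β for a fixed β ≠ 0, and such that all 3×3 principal minors of A are equal. Then there exists ξ ∈ {-1, 1} such that A is sign-equivalent to T_{α, ξβ}: there is a diagonal matrix E with entries ±1 such that E·A·E = T_{α, ξ|β|}; in particular A has the same principal minors of every size as T_{α, ξ|β|}. -/

import Mathlib

open Matrix

lemma det_triple {d : ℕ} (A : Matrix (Fin d) (Fin d) ℝ) (i j k : Fin d)
    (hij : i ≠ j) (hik : i ≠ k) (hjk : j ≠ k) :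
    Matrix.det (A.submatrix
        (Subtype.val : {x // x ∈ ({i,j,k} : Finset (Fin d))} → Fin d) Subtype.val)
      = Matrix.det !![A i i, A i j, A i k; A j i, A j j, A j k; A k i, A k j, A k k] := by
  classical
  have hf : ∀ a : Fin 3, (![i,j,k] a) ∈ ({i,j,k} : Finset (Fin d)) := by
    intro a; fin_cases a <;> simp
  let f : Fin 3 → {x // x ∈ ({i,j,k} : Finset (Fin d))} := fun a => ⟨![i,j,k] a, hf a⟩
  have hinj : Function.Injective f := by
    intro a b hab
    have h : (![i,j,k] a) = ![i,j,k] b := congrArg Subtype.val hab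
    fin_cases a <;> fin_cases b <;> simp_all
  have hcard : ({i,j,k} : Finset (Fin d)).card = 3 := by
    rw [Finset.card_insert_of_notMem (by simp [hij, hik]),
        Finset.card_insert_of_notMem (by simp [hjk]), Finset.card_singleton]
  have hbij : Function.Bijective f :=
    (Fintype.bijective_iff_injective_and_card f).mpr ⟨hinj, by rw [Fintype.card_coe]; exact hcard.symm⟩
  let e : Fin 3 ≃ {x // x ∈ ({i,j,k} : Finset (Fin d))} := Equiv.ofBijective f hbij
  rw [← Matrix.det_submatrix_equiv_self e (A.submatrix Subtype.val Subtype.val)]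
  congr 1
  ext a b
  fin_cases a <;> fin_cases b <;> rfl


lemma aux_sign {d : ℕ} (hd : 3 ≤ d) (A : Matrix (Fin d) (Fin d) ℝ) (hA : A.IsSymm)
    (α β γ : ℝ) (hβ : β ≠ 0)
    (hdiag : ∀ i, A i i = α)
    (hoff : ∀ i j, i ≠ j → A i j = β ∨ A i j = -β)
    (hγ2 : γ * γ = β ^ 2)
    (hconst : ∀ i j k : Fin d, i ≠ j → i ≠ k → j ≠ k → A i j * A i k * A j k = γ * β ^ 2) :
    ∃ ε : Fin d → ℝ, (∀ i, ε i = 1 ∨ ε i = -1) ∧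
      Matrix.diagonal ε * A * Matrix.diagonal ε
        = Matrix.of (fun i j : Fin d => if i = j then α else γ) ∧
      ∀ S : Finset (Fin d),
        Matrix.det (A.submatrix (Subtype.val : {x // x ∈ S} → Fin d) Subtype.val)
          = Matrix.det ((Matrix.of fun i j : Fin d => if i = j then α else γ).submatrix
              (Subtype.val : {x // x ∈ S} → Fin d) Subtype.val) := by
  classical
  have hs : ∀ a b : Fin d, A b a = A a b := fun a b => hA.apply a b
  have hsq : ∀ i j : Fin d, i ≠ j → A i j * A i j = β ^ 2 := by
    intro i j h; rcases hoff i j h with h' | h' <;> rw [h'] <;> ring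
  set z0 : Fin d := ⟨0, by omega⟩ with hz0
  set ε : Fin d → ℝ := fun i => if i = z0 then γ / β else A z0 i / β with hε
  have hε2 : ∀ i, ε i * ε i = 1 := by
    intro i
    by_cases h : i = z0
    · simp only [hε, h, if_pos rfl]
      field_simp
      linear_combination hγ2
    · simp only [hε, if_neg h]
      field_simp
      linear_combination hsq z0 i (fun he => h he.symm)
  have hεpm : ∀ i, ε i = 1 ∨ ε i = -1 := fun i => mul_self_eq_one_iff.mp (hε2 i)
  have hE : ∀ i j : Fin d, i ≠ j → ε i * A i j * ε j = γ := by
    intro i j hij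
    by_cases hi : i = z0
    · subst hi
      have hj : j ≠ z0 := fun h => hij h.symm
      simp only [hε, if_pos rfl, if_neg hj]
      field_simp
      linear_combination γ * hsq z0 j hij
    · by_cases hj : j = z0
      · subst hj
        simp only [hε, if_neg hi, if_pos rfl]
        rw [hs z0 i]
        field_simp
        linear_combination γ * hsq z0 i (fun h => hi h.symm)
      · simp only [hε, if_neg hi, if_neg hj]
        field_simp
        linear_combination hconst z0 i j (fun h => hi h.symm) (fun h => hj h.symm) hij
  have hmat : Matrix.diagonal ε * A * Matrix.diagonal ε
      = Matrix.of (fun i j : Fin d => if i = j then α else γ) := by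
    ext i j
    rw [Matrix.mul_diagonal, Matrix.diagonal_mul]
    by_cases h : i = j
    · subst h
      simp only [Matrix.of_apply, if_pos rfl, hdiag i]
      calc ε i * α * ε i = ε i * ε i * α := by ring
        _ = α := by rw [hε2 i]; ring
    · simp only [Matrix.of_apply, if_neg h]
      exact hE i j h
  refine ⟨ε, hεpm, hmat, ?_⟩
  intro S
  have hsub : (Matrix.of fun i j : Fin d => if i = j then α else γ).submatrix
        (Subtype.val : {x // x ∈ S} → Fin d) Subtype.val
      = Matrix.diagonal (fun a : {x // x ∈ S} => ε a.val)
        * A.submatrix (Subtype.val : {x // x ∈ S} → Fin d) Subtype.val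
        * Matrix.diagonal (fun a : {x // x ∈ S} => ε a.val) := by
    ext a b
    rw [Matrix.mul_diagonal, Matrix.diagonal_mul, ← hmat]
    simp [Matrix.submatrix_apply, Matrix.mul_diagonal, Matrix.diagonal_mul]
  rw [hsub, Matrix.det_mul, Matrix.det_mul, Matrix.det_diagonal]
  have hprod : (∏ a : {x // x ∈ S}, ε a.val) * (∏ a : {x // x ∈ S}, ε a.val) = 1 := by
    rw [← Finset.prod_mul_distrib]
    exact Finset.prod_eq_one fun a _ => hε2 a.val
  linear_combination (Matrix.det (A.submatrix (Subtype.val : {x // x ∈ S} → Fin d)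
    Subtype.val)) * hprod.symm
/-- If `A` is real symmetric (`d ≥ 3`) with diagonal `α`, off-diagonal entries
`±β` with `β ≠ 0`, and all `3×3` principal minors equal, then there is a sign
`ξ ∈ {-1,1}` and a diagonal sign matrix `E` with `E A E = T_{α, ξ|β|}`; in
particular `A` has the same principal minors of every size as `T_{α, ξ|β|}`. -/
theorem sign_equivalence_toeplitz (d : ℕ) (hd : 3 ≤ d)
    (A : Matrix (Fin d) (Fin d) ℝ) (hA : A.IsSymm) (α β : ℝ) (hβ : β ≠ 0)
    (hdiag : ∀ i, A i i = α)
    (hoff : ∀ i j, i ≠ j → A i j = β ∨ A i j = -β)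
    (hmin : ∀ S T : Finset (Fin d), S.card = 3 → T.card = 3 →
      Matrix.det (A.submatrix (Subtype.val : {x // x ∈ S} → Fin d) Subtype.val)
        = Matrix.det (A.submatrix (Subtype.val : {x // x ∈ T} → Fin d) Subtype.val)) :
    ∃ ξ : ℝ, (ξ = 1 ∨ ξ = -1) ∧
      ∃ ε : Fin d → ℝ, (∀ i, ε i = 1 ∨ ε i = -1) ∧
        Matrix.diagonal ε * A * Matrix.diagonal ε
          = Matrix.of (fun i j : Fin d => if i = j then α else ξ * |β|) ∧
        ∀ S : Finset (Fin d),
          Matrix.det (A.submatrix (Subtype.val : {x // x ∈ S} → Fin d) Subtype.val)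
            = Matrix.det ((Matrix.of fun i j : Fin d => if i = j then α else ξ * |β|).submatrix
                (Subtype.val : {x // x ∈ S} → Fin d) Subtype.val) := by
  classical
  have hs : ∀ a b : Fin d, A b a = A a b := fun a b => hA.apply a b
  have hsq : ∀ i j : Fin d, i ≠ j → A i j * A i j = β ^ 2 := by
    intro i j h; rcases hoff i j h with h' | h' <;> rw [h'] <;> ring
  have hcard3 : ∀ i j k : Fin d, i ≠ j → i ≠ k → j ≠ k →
      ({i,j,k} : Finset (Fin d)).card = 3 := by
    intro i j k hij hik hjk
    rw [Finset.card_insert_of_notMem (by simp [hij, hik]),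
        Finset.card_insert_of_notMem (by simp [hjk]), Finset.card_singleton]
  have hform : ∀ i j k : Fin d, i ≠ j → i ≠ k → j ≠ k →
      Matrix.det (A.submatrix
          (Subtype.val : {x // x ∈ ({i,j,k} : Finset (Fin d))} → Fin d) Subtype.val)
        = α ^ 3 - 3 * α * β ^ 2 + 2 * (A i j * A i k * A j k) := by
    intro i j k hij hik hjk
    rw [det_triple A i j k hij hik hjk, Matrix.det_fin_three]
    norm_num [Matrix.cons_val_one, Matrix.cons_val_two]
    rw [hdiag i, hdiag j, hdiag k, hs i j, hs i k, hs j k]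
    linear_combination (-α) * hsq i j hij + (-α) * hsq i k hik + (-α) * hsq j k hjk
  set z0 : Fin d := ⟨0, by omega⟩ with hz0
  set z1 : Fin d := ⟨1, by omega⟩ with hz1
  set z2 : Fin d := ⟨2, by omega⟩ with hz2
  have h01 : z0 ≠ z1 := by simp [hz0, hz1, Fin.ext_iff]
  have h02 : z0 ≠ z2 := by simp [hz0, hz2, Fin.ext_iff]
  have h12 : z1 ≠ z2 := by simp [hz1, hz2, Fin.ext_iff]
  have hconst : ∀ i j k : Fin d, i ≠ j → i ≠ k → j ≠ k →
      A i j * A i k * A j k = A z0 z1 * A z0 z2 * A z1 z2 := by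
    intro i j k hij hik hjk
    have h := hmin {i,j,k} {z0,z1,z2} (hcard3 i j k hij hik hjk) (hcard3 z0 z1 z2 h01 h02 h12)
    rw [hform i j k hij hik hjk, hform z0 z1 z2 h01 h02 h12] at h
    linarith
  have hpcases : A z0 z1 * A z0 z2 * A z1 z2 = β ^ 2 * β
      ∨ A z0 z1 * A z0 z2 * A z1 z2 = -(β ^ 2 * β) := by
    rcases hoff z0 z1 h01 with h1 | h1 <;> rcases hoff z0 z2 h02 with h2 | h2 <;>
      rcases hoff z1 z2 h12 with h3 | h3 <;> rw [h1, h2, h3] <;>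
      first | (left; ring1) | (right; ring1)
  have habs := abs_choice β
  have hp : A z0 z1 * A z0 z2 * A z1 z2 = (1 * |β|) * β ^ 2
      ∨ A z0 z1 * A z0 z2 * A z1 z2 = (-1 * |β|) * β ^ 2 := by
    rcases hpcases with h | h <;> rcases habs with hb | hb <;> rw [h, hb] <;>
      first | (left; ring1) | (right; ring1)
  have habs2 : |β| * |β| = β ^ 2 := by rw [abs_mul_abs_self]; ring
  rcases hp with hp | hp
  · refine ⟨1, Or.inl rfl, ?_⟩
    exact aux_sign hd A hA α β (1 * |β|) hβ hdiag hoff (by linear_combination habs2)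
      (fun i j k hij hik hjk => by rw [hconst i j k hij hik hjk, hp])
  · refine ⟨-1, Or.inr rfl, ?_⟩
    exact aux_sign hd A hA α β (-1 * |β|) hβ hdiag hoff (by linear_combination habs2)
      (fun i j k hij hik hjk => by rw [hconst i j k hij hik hjk, hp])
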